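/- Let R be a commutative ring, let (X,d) be a compact metric space, and let T be an action of the additive group of R on X by isometries (so each T^a : X → X is an isometry and T^{a+b} = T^a ∘ T^b). Then for any monomial mapping φ : R^n → R, any x ∈ X, and any ε > 0, there exists r ∈ ℕ such that the set {u ∈ R^n : d(T^{φ(u)} x, x) < ε} is IP*_r in the additive group R^n. -/

import Mathlib

section AuxIPRecurrence
open Finset

/-- γ-version of the finite unions theorem from multidimensional Hales–Jewett. -/
theorem unionHJ (κ : Type*) [Fintype κ] (J : Type) [Fintype J] [DecidableEq J] :
    ∃ N : ℕ, ∀ χ : Finset (Fin N) → κ,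
      ∃ (γ : Finset (Fin N)) (β : J → Finset (Fin N)),
        (∀ j, (β j).Nonempty) ∧
        (∀ j j', j ≠ j' → Disjoint (β j) (β j')) ∧
        (∀ j, Disjoint γ (β j)) ∧
        (∀ S : Finset J, χ (γ ∪ S.biUnion β) = χ γ) := by
  classical
  obtain ⟨N, hN⟩ := Combinatorics.Subspace.exists_mono_in_high_dimension_fin Bool κ J
  refine ⟨N, fun χ => ?_⟩
  obtain ⟨l, c, hc⟩ := hN (fun v => χ (Finset.univ.filter (fun i => v i = true)))
  set γ : Finset (Fin N) := Finset.univ.filter (fun i => l.idxFun i = Sum.inl true) with hγ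
  set β : J → Finset (Fin N) := fun j => Finset.univ.filter (fun i => l.idxFun i = Sum.inr j)
    with hβ
  have hsupp : ∀ S : Finset J,
      Finset.univ.filter (fun i => l (fun j => decide (j ∈ S)) i = true) = γ ∪ S.biUnion β := by
    intro S
    ext i
    simp only [mem_filter, mem_univ, true_and, mem_union, mem_biUnion, hγ, hβ]
    rw [Combinatorics.Subspace.apply_def]
    cases h : l.idxFun i with
    | inl a => simp [h]
    | inr e => simp [h]
  have key : ∀ b : J → Bool, χ (Finset.univ.filter (fun i => l b i = true)) = c :=
    fun b => hc b
  refine ⟨γ, β, ?_, ?_, ?_, ?_⟩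
  · intro j
    obtain ⟨i, hi⟩ := l.proper j
    exact ⟨i, by simp [hβ, hi]⟩
  · intro j j' hjj'
    simp only [hβ, disjoint_left, mem_filter]
    rintro i ⟨_, h1⟩ ⟨_, h2⟩
    rw [h1] at h2
    exact hjj' (Sum.inr_injective h2)
  · intro j
    simp only [hγ, hβ, disjoint_left, mem_filter]
    rintro i ⟨_, h1⟩ ⟨_, h2⟩
    rw [h1] at h2; exact absurd h2 (by simp)
  · intro S
    have h1 := key (fun j => decide (j ∈ S))
    rw [hsupp S] at h1
    have h0 := key (fun j => decide (j ∈ (∅ : Finset J)))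
    rw [hsupp ∅] at h0
    simp only [Finset.biUnion_empty, Finset.union_empty] at h0
    rw [h1, h0]

/-- Finite unions theorem, weak form: the color of a union depends only on the largest block. -/
theorem FUmax (κ : Type*) [Fintype κ] : ∀ m : ℕ, ∃ N : ℕ, ∀ χ : Finset (Fin N) → κ,
    ∃ D : Fin m → Finset (Fin N),
      (∀ j, (D j).Nonempty) ∧
      (∀ j j', j ≠ j' → Disjoint (D j) (D j')) ∧
      ∃ c : Fin m → κ, ∀ (T : Finset (Fin m)) (hT : T.Nonempty),
        χ (T.biUnion D) = c (T.max' hT) := by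
  classical
  intro m
  induction m with
  | zero =>
    exact ⟨0, fun χ => ⟨Fin.elim0, fun j => j.elim0, fun j => j.elim0,
      Fin.elim0, fun T hT => hT.choose.elim0⟩⟩
  | succ m ih =>
    obtain ⟨N₀, h₀⟩ := ih
    obtain ⟨N, hU⟩ := unionHJ κ (Option (Fin N₀))
    refine ⟨N, fun χ => ?_⟩
    obtain ⟨γ, β, hβne, hβdisj, hγdisj, hmono⟩ := hU χ
    set χ₂ : Finset (Fin N₀) → κ := fun s => χ (s.biUnion fun g => β (some g)) with hχ₂
    obtain ⟨D₀, hne₀, hdisj₀, c₀, hc₀⟩ := h₀ χ₂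
    set D : Fin (m + 1) → Finset (Fin N) :=
      Fin.lastCases (γ ∪ β none) (fun i => (D₀ i).biUnion fun g => β (some g)) with hD
    have hDlast : D (Fin.last m) = γ ∪ β none := by simp [hD]
    have hDcast : ∀ i : Fin m, D i.castSucc = (D₀ i).biUnion fun g => β (some g) := by
      intro i; simp [hD]
    have haux : ∀ (i : Fin m), Disjoint (D (Fin.last m)) (D i.castSucc) := by
      intro i
      rw [hDlast, hDcast, Finset.disjoint_left]
      intro z hz hz'
      obtain ⟨g, _, hzg⟩ := Finset.mem_biUnion.1 hz'
      rcases Finset.mem_union.1 hz with h | h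
      · exact (Finset.disjoint_left.1 (hγdisj (some g))) h hzg
      · exact (Finset.disjoint_left.1 (hβdisj none (some g) (by simp))) h hzg
    refine ⟨D, ?_, ?_, Fin.lastCases (χ γ) c₀, ?_⟩
    · intro j
      refine Fin.lastCases ?_ (fun i => ?_) j
      · rw [hDlast]
        obtain ⟨z, hz⟩ := hβne none
        exact ⟨z, Finset.mem_union_right _ hz⟩
      · rw [hDcast]
        obtain ⟨g, hg⟩ := hne₀ i
        obtain ⟨z, hz⟩ := hβne (some g)
        exact ⟨z, Finset.mem_biUnion.2 ⟨g, hg, hz⟩⟩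
    · intro j j' hjj'
      rcases Fin.eq_castSucc_or_eq_last j with ⟨i, rfl⟩ | rfl <;>
        rcases Fin.eq_castSucc_or_eq_last j' with ⟨i', rfl⟩ | rfl
      · have hii' : i ≠ i' := fun h => hjj' (by rw [h])
        rw [hDcast, hDcast, Finset.disjoint_left]
        intro z hz hz'
        obtain ⟨g, hg, hzg⟩ := Finset.mem_biUnion.1 hz
        obtain ⟨g', hg', hzg'⟩ := Finset.mem_biUnion.1 hz'
        rcases eq_or_ne g g' with rfl | hgg'
        · exact (Finset.disjoint_left.1 (hdisj₀ i i' hii')) hg hg'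
        · exact (Finset.disjoint_left.1 (hβdisj (some g) (some g') (by simpa))) hzg hzg'
      · exact (haux i).symm
      · exact haux i'
      · exact absurd rfl hjj'
    · intro T hT
      by_cases hlast : Fin.last m ∈ T
      · have hmax : T.max' hT = Fin.last m :=
          le_antisymm (Finset.max'_le _ _ _ fun z _ => Fin.le_last z)
            (Finset.le_max' _ _ hlast)
        set T' : Finset (Fin m) := Finset.univ.filter (fun i => i.castSucc ∈ T) with hT'
        have hun : T.biUnion D =
            γ ∪ (insert none ((T'.biUnion D₀).image some)).biUnion β := by
          ext z
          simp only [Finset.mem_biUnion, Finset.mem_union, Finset.mem_insert,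
            Finset.mem_image, hT', Finset.mem_filter, Finset.mem_univ, true_and]
          constructor
          · rintro ⟨j, hj, hz⟩
            rcases Fin.eq_castSucc_or_eq_last j with ⟨i, rfl⟩ | rfl
            · rw [hDcast] at hz
              obtain ⟨g, hg, hzg⟩ := Finset.mem_biUnion.1 hz
              exact Or.inr ⟨some g, Or.inr ⟨g, ⟨i, hj, hg⟩, rfl⟩, hzg⟩
            · rw [hDlast] at hz
              rcases Finset.mem_union.1 hz with h | h
              · exact Or.inl h
              · exact Or.inr ⟨none, Or.inl rfl, h⟩
          · rintro (h | ⟨j, hj, hz⟩)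
            · exact ⟨Fin.last m, hlast, by rw [hDlast]; exact Finset.mem_union_left _ h⟩
            · rcases hj with rfl | ⟨g, ⟨i, hi2, hg⟩, rfl⟩
              · exact ⟨Fin.last m, hlast, by rw [hDlast]; exact Finset.mem_union_right _ hz⟩
              · refine ⟨i.castSucc, hi2, ?_⟩
                rw [hDcast]
                exact Finset.mem_biUnion.2 ⟨g, hg, hz⟩
        rw [hun, hmono, hmax]
        simp
      · set T' : Finset (Fin m) := Finset.univ.filter (fun i => i.castSucc ∈ T) with hT'
        have hT'ne : T'.Nonempty := by
          obtain ⟨j, hj⟩ := hT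
          rcases Fin.eq_castSucc_or_eq_last j with ⟨i, rfl⟩ | rfl
          · exact ⟨i, by simp [hT', hj]⟩
          · exact absurd hj hlast
        have hTT' : T = T'.image Fin.castSucc := by
          ext j
          simp only [Finset.mem_image, hT', Finset.mem_filter, Finset.mem_univ, true_and]
          constructor
          · intro hj
            rcases Fin.eq_castSucc_or_eq_last j with ⟨i, rfl⟩ | rfl
            · exact ⟨i, hj, rfl⟩
            · exact absurd hj hlast
          · rintro ⟨i, hi, rfl⟩; exact hi
        have hmax : T.max' hT = (T'.max' hT'ne).castSucc := by
          refine le_antisymm ?_ ?_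
          · rcases Fin.eq_castSucc_or_eq_last (T.max' hT) with ⟨i, hi⟩ | hi
            · have hiT' : i ∈ T' := by
                simp only [hT', Finset.mem_filter, Finset.mem_univ, true_and, ← hi]
                exact T.max'_mem hT
              rw [hi, Fin.castSucc_le_castSucc_iff]
              exact Finset.le_max' _ _ hiT'
            · exact absurd (hi ▸ T.max'_mem hT) hlast
          · refine Finset.le_max' _ _ ?_
            rw [hTT']
            exact Finset.mem_image_of_mem _ (T'.max'_mem hT'ne)
        have hun : T.biUnion D = (T'.biUnion D₀).biUnion fun g => β (some g) := by
          rw [hTT', Finset.image_biUnion]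
          exact (Finset.biUnion_congr rfl fun i _ => hDcast i).trans
            (Finset.biUnion_biUnion _ _ _).symm
        have h2 := hc₀ T' hT'ne
        simp only [hχ₂] at h2
        rw [hun, hmax, h2]
        simp

/-- Finite unions theorem: monochromatic version. -/
theorem FUmono (κ : Type*) [Fintype κ] (m : ℕ) : ∃ N : ℕ, ∀ χ : Finset (Fin N) → κ,
    ∃ D : Fin m → Finset (Fin N),
      (∀ j, (D j).Nonempty) ∧
      (∀ j j', j ≠ j' → Disjoint (D j) (D j')) ∧
      ∀ (T T' : Finset (Fin m)), T.Nonempty → T'.Nonempty →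
        χ (T.biUnion D) = χ (T'.biUnion D) := by
  classical
  obtain ⟨N, hN⟩ := FUmax κ (Fintype.card κ * m + 1)
  refine ⟨N, fun χ => ?_⟩
  obtain ⟨D, hne, hdisj, c, hc⟩ := hN χ
  have hcard : Fintype.card κ * m < Fintype.card (Fin (Fintype.card κ * m + 1)) := by
    simp
  obtain ⟨q, hq⟩ := Fintype.exists_lt_card_fiber_of_mul_lt_card c hcard
  obtain ⟨t, hts, htcard⟩ := Finset.exists_subset_card_eq hq.le
  obtain ⟨e, hmono, hqe⟩ : ∃ e : Fin m → Fin (Fintype.card κ * m + 1),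
      StrictMono e ∧ ∀ i, c (e i) = q := by
    refine ⟨fun i => t.orderEmbOfFin htcard i, fun a b hab => ?_, fun i => ?_⟩
    · exact (t.orderEmbOfFin htcard).strictMono hab
    · have := hts (t.orderEmbOfFin_mem htcard i)
      simpa using this
  refine ⟨fun j => D (e j), fun j => hne _, fun j j' hjj' => hdisj _ _ (fun h => hjj' (hmono.injective h)), ?_⟩
  have key : ∀ (T : Finset (Fin m)) (hT : T.Nonempty), χ (T.biUnion fun j => D (e j)) = q := by
    intro T hT
    have h1 : T.biUnion (fun j => D (e j)) = (T.image e).biUnion D := by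
      rw [Finset.image_biUnion]
    have h2 : (T.image e).Nonempty := hT.image e
    rw [h1, hc _ h2]
    have h3 : (T.image e).max' h2 = e (T.max' hT) := by
      apply le_antisymm
      · apply Finset.max'_le
        intro z hz
        obtain ⟨i, hi, rfl⟩ := Finset.mem_image.1 hz
        exact hmono.monotone (Finset.le_max' _ _ hi)
      · exact Finset.le_max' _ _ (Finset.mem_image_of_mem _ (T.max'_mem hT))
    rw [h3, hqe]
  intro T T' h h'
  rw [key T h, key T' h']

lemma sum_superset_neg_one_pow {m : ℕ} {R : Type*} [CommRing R] (A : Finset (Fin m))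
    (hA : A ≠ univ) :
    ∑ S ∈ (univ : Finset (Fin m)).powerset.filter (fun S => A ⊆ S), (-1 : R) ^ S.card = 0 := by
  classical
  have hne : ((univ : Finset (Fin m)) \ A).Nonempty := by
    rw [Finset.sdiff_nonempty]
    intro h
    exact hA (le_antisymm (Finset.subset_univ A) h)
  have hbij : ∑ S ∈ (univ : Finset (Fin m)).powerset.filter (fun S => A ⊆ S), (-1 : R) ^ S.card
      = ∑ T ∈ ((univ : Finset (Fin m)) \ A).powerset, (-1 : R) ^ (A ∪ T).card := by
    refine Finset.sum_bij' (fun S _ => S \ A) (fun T _ => A ∪ T) ?_ ?_ ?_ ?_ ?_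
    · intro S hS
      simp only [Finset.mem_filter, Finset.mem_powerset] at hS
      simp only [Finset.mem_powerset]
      exact Finset.sdiff_subset_sdiff (Finset.subset_univ S) le_rfl
    · intro T hT
      simp only [Finset.mem_powerset] at hT
      simp only [Finset.mem_filter, Finset.mem_powerset]
      exact ⟨Finset.subset_univ _, Finset.subset_union_left⟩
    · intro S hS
      simp only [Finset.mem_filter, Finset.mem_powerset] at hS
      show A ∪ (S \ A) = S
      rw [Finset.union_sdiff_of_subset hS.2]
    · intro T hT
      simp only [Finset.mem_powerset] at hT
      show (A ∪ T) \ A = T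
      exact Finset.union_sdiff_cancel_left
        (Finset.disjoint_of_subset_right hT Finset.disjoint_sdiff)
    · intro S hS
      simp only [Finset.mem_filter, Finset.mem_powerset] at hS
      show (-1 : R) ^ S.card = (-1 : R) ^ (A ∪ S \ A).card
      rw [Finset.union_sdiff_of_subset hS.2]
  rw [hbij]
  have hcard : ∀ T ∈ ((univ : Finset (Fin m)) \ A).powerset,
      (-1 : R) ^ (A ∪ T).card = (-1) ^ A.card * (-1) ^ T.card := by
    intro T hT
    rw [Finset.mem_powerset] at hT
    rw [Finset.card_union_of_disjoint, pow_add]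
    exact Finset.disjoint_of_subset_right hT (Finset.disjoint_sdiff)
  rw [Finset.sum_congr rfl hcard, ← Finset.mul_sum]
  have hz : ((∑ T ∈ ((univ : Finset (Fin m)) \ A).powerset, (-1 : ℤ) ^ T.card : ℤ) : R) = 0 := by
    rw [Finset.sum_powerset_neg_one_pow_card_of_nonempty hne]
    simp
  push_cast at hz
  rw [hz, mul_zero]

lemma monomial_alt_sum {R : Type*} [CommRing R] {n m : ℕ} (a : R) (d : Fin n → ℕ)
    (hm : ∑ i, d i < m) (u : Fin m → (Fin n → R)) :
    ∑ S ∈ (univ : Finset (Fin m)).powerset,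
      (-1 : R) ^ S.card * (a * ∏ i, (∑ j ∈ S, u j i) ^ d i) = 0 := by
  classical
  -- index type for the multilinear expansion
  set P := (Σ i : Fin n, Fin (d i)) with hP
  have hcardP : Fintype.card P = ∑ i, d i := by
    simp [hP]
  have himg : ∀ (g : P → Fin m), (univ.image g : Finset (Fin m)) ≠ univ := by
    intro g hAuniv
    have h1 : m ≤ (univ.image g).card := by
      rw [hAuniv, Finset.card_univ, Fintype.card_fin]
    have h2 : (univ.image g).card ≤ ∑ i, d i := by
      calc (univ.image g).card ≤ (univ : Finset P).card := Finset.card_image_le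
        _ = ∑ i, d i := by rw [Finset.card_univ, hcardP]
    omega
  have expand : ∀ S : Finset (Fin m),
      (∏ i, (∑ j ∈ S, u j i) ^ d i)
        = ∑ g ∈ Fintype.piFinset (fun _ : P => S), ∏ p : P, u (g p) p.1 := by
    intro S
    have h1 : (∏ i, (∑ j ∈ S, u j i) ^ d i) = ∏ p : P, (∑ j ∈ S, u j p.1) := by
      rw [← Finset.univ_sigma_univ, Finset.prod_sigma]
      refine Finset.prod_congr rfl fun i _ => ?_
      simp
    rw [h1, Finset.prod_univ_sum]
  calc ∑ S ∈ (univ : Finset (Fin m)).powerset,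
        (-1 : R) ^ S.card * (a * ∏ i, (∑ j ∈ S, u j i) ^ d i)
      = ∑ S ∈ (univ : Finset (Fin m)).powerset, ∑ g ∈ Fintype.piFinset (fun _ : P => S),
          (-1 : R) ^ S.card * (a * ∏ p : P, u (g p) p.1) := by
        refine Finset.sum_congr rfl fun S _ => ?_
        rw [expand S, Finset.mul_sum, Finset.mul_sum]
    _ = ∑ g ∈ (univ : Finset (P → Fin m)),
          ∑ S ∈ (univ : Finset (Fin m)).powerset.filter (fun S => univ.image g ⊆ S),
          (-1 : R) ^ S.card * (a * ∏ p : P, u (g p) p.1) := by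
        refine Finset.sum_comm' ?_
        intro S g
        simp only [Finset.mem_powerset, Fintype.mem_piFinset, Finset.mem_filter,
          Finset.mem_univ, true_and, and_true, Finset.subset_univ]
        constructor
        · intro h z hz
          obtain ⟨p, _, rfl⟩ := Finset.mem_image.1 hz
          exact h p
        · intro h p
          exact h (Finset.mem_image_of_mem g (Finset.mem_univ p))
    _ = 0 := by
        refine Finset.sum_eq_zero fun g _ => ?_
        rw [← Finset.sum_mul, sum_superset_neg_one_pow _ (himg g), zero_mul]

end AuxIPRecurrence

open Set

/-- Finite sums set `FS(x₁,…,x_r)`. -/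
def FSfin {G : Type*} [AddCommMonoid G] {r : ℕ} (x : Fin r → G) : Set G :=
  {g | ∃ α : Finset (Fin r), α.Nonempty ∧ ∑ i ∈ α, x i = g}

/-- `A` is an IP_r set: it contains `FS(x₁,…,x_r)` for some `x₁,…,x_r`. -/
def IsIPr {G : Type*} [AddCommMonoid G] (r : ℕ) (A : Set G) : Prop :=
  ∃ x : Fin r → G, FSfin x ⊆ A

/-- `A` is an IP*_r set: it meets every IP_r set. -/
def IsIPrStar {G : Type*} [AddCommMonoid G] (r : ℕ) (A : Set G) : Prop :=
  ∀ B : Set G, IsIPr r B → (A ∩ B).Nonempty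

/-- A monomial mapping `R^n → R`: `u ↦ a · u₁^{d₁} ⋯ u_n^{d_n}` with the `dᵢ` not all zero. -/
def IsMonomialMap {R : Type*} [CommRing R] {n : ℕ} (ψ : (Fin n → R) → R) : Prop :=
  ∃ (a : R) (d : Fin n → ℕ), (∃ i, d i ≠ 0) ∧ ∀ u, ψ u = a * ∏ i, (u i) ^ (d i)

/-- **Topological recurrence.** For an action `T` of the additive group of a commutative
ring `R` on a compact metric space by isometries, a monomial mapping `φ : R^n → R`, a point
`x` and `ε > 0`, the set of returns `{u : d(T^{φ(u)} x, x) < ε}` is IP*_r for some `r`. -/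
theorem monomial_topological_recurrence_iprstar
    {R : Type*} [CommRing R] {X : Type*} [MetricSpace X] [CompactSpace X]
    (T : R → X → X) (hT0 : T 0 = id)
    (hTadd : ∀ a b : R, T (a + b) = T a ∘ T b)
    (hTiso : ∀ a : R, Isometry (T a))
    {n : ℕ} (φ : (Fin n → R) → R) (hφ : IsMonomialMap φ)
    (x : X) (ε : ℝ) (hε : 0 < ε) :
    ∃ r : ℕ, IsIPrStar r {u : Fin n → R | dist (T (φ u) x) x < ε} := by
  classical
  obtain ⟨a, d, ⟨i₀, hi₀⟩, hφeq⟩ := hφ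
  -- the displacement pseudo-norm `f`
  set f : R → ℝ := fun c => dist (T c x) x with hf
  have hdist : ∀ b c : R, dist (T b x) (T c x) = f (b - c) := by
    intro b c
    have h1 : T (-c) (T b x) = T (b - c) x := by
      rw [← Function.comp_apply (f := T (-c)) (g := T b), ← hTadd]
      ring_nf
    have h2 : T (-c) (T c x) = x := by
      rw [← Function.comp_apply (f := T (-c)) (g := T c), ← hTadd]
      simp [hT0]
    calc dist (T b x) (T c x) = dist (T (-c) (T b x)) (T (-c) (T c x)) :=
          ((hTiso (-c)).dist_eq _ _).symm
      _ = dist (T (b - c) x) x := by rw [h1, h2]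
      _ = f (b - c) := rfl
  have hf0 : f 0 = 0 := by simp [hf, hT0]
  have hfneg : ∀ c, f (-c) = f c := by
    intro c
    calc f (-c) = f (0 - c) := by rw [zero_sub]
      _ = dist (T 0 x) (T c x) := (hdist 0 c).symm
      _ = dist x (T c x) := by rw [hT0]; rfl
      _ = dist (T c x) x := dist_comm _ _
      _ = f c := rfl
  have hfadd : ∀ b c, f (b + c) ≤ f b + f c := by
    intro b c
    have h1 : dist (T (b + c) x) (T b x) = f c := by
      rw [hdist]; ring_nf
    calc f (b + c) = dist (T (b + c) x) x := rfl
      _ ≤ dist (T (b + c) x) (T b x) + dist (T b x) x := dist_triangle _ _ _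
      _ = f c + f b := by rw [h1]
      _ = f b + f c := by ring
  have hfsum : ∀ {ι : Type} (s : Finset ι) (w : ι → R), f (∑ i ∈ s, w i) ≤ ∑ i ∈ s, f (w i) := by
    intro ι s w
    induction s using Finset.cons_induction with
    | empty => simp [hf0]
    | cons i s hi ih =>
      rw [Finset.sum_cons, Finset.sum_cons]
      exact le_trans (hfadd _ _) (by linarith)
  -- degree data
  set m : ℕ := (∑ i, d i) + 1 with hm
  have hm1 : 1 ≤ m := by omega
  -- a finite ρ-net of X
  set ρ : ℝ := ε / 2 ^ (m + 1) with hρ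
  have hρpos : 0 < ρ := by positivity
  obtain ⟨t, -, htfin, htcov⟩ := finite_cover_balls_of_compact (isCompact_univ (X := X)) hρpos
  haveI : Fintype t := htfin.fintype
  have hcnet : ∀ c : R, ∃ z : t, dist (T c x) (z : X) < ρ := by
    intro c
    have := htcov (Set.mem_univ (T c x))
    simp only [Set.mem_iUnion, Metric.mem_ball] at this
    obtain ⟨z, hz, hdz⟩ := this
    exact ⟨⟨z, hz⟩, hdz⟩
  set colorOf : R → t := fun c => (hcnet c).choose with hcolorOf
  have hcolor : ∀ b c : R, colorOf b = colorOf c → f (b - c) < 2 * ρ := by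
    intro b c hbc
    have h1 : dist (T b x) (colorOf b : X) < ρ := (hcnet b).choose_spec
    have h2 : dist (T c x) (colorOf c : X) < ρ := (hcnet c).choose_spec
    have : dist (T b x) (T c x) < 2 * ρ := by
      calc dist (T b x) (T c x) ≤ dist (T b x) (colorOf b : X) + dist (colorOf c : X) (T c x) := by
            rw [hbc]; exact dist_triangle _ _ _
        _ < ρ + ρ := by
            rw [dist_comm (colorOf c : X)]
            exact add_lt_add h1 h2
        _ = 2 * ρ := by ring
    rwa [hdist] at this
  -- get `r` from the finite unions theorem
  obtain ⟨r, hr⟩ := FUmono t m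
  refine ⟨r, ?_⟩
  rintro B ⟨y, hyB⟩
  set χ : Finset (Fin r) → t := fun α => colorOf (φ (∑ i ∈ α, y i)) with hχ
  obtain ⟨Dset, hDne, hDdisj, hDmono⟩ := hr χ
  set u : Fin m → (Fin n → R) := fun j => ∑ i ∈ Dset j, y i with hu
  have husum : ∀ S : Finset (Fin m), ∑ j ∈ S, u j = ∑ i ∈ S.biUnion Dset, y i := by
    intro S
    rw [Finset.sum_biUnion]
    intro j hj j' hj' hne
    exact hDdisj j j' hne
  set v : Finset (Fin m) → R := fun S => φ (∑ j ∈ S, u j) with hv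
  have hvals : ∀ S S' : Finset (Fin m), S.Nonempty → S'.Nonempty → f (v S - v S') < 2 * ρ := by
    intro S S' hS hS'
    apply hcolor
    have h1 : colorOf (v S) = χ (S.biUnion Dset) := by
      show colorOf (φ (∑ j ∈ S, u j)) = colorOf (φ (∑ i ∈ S.biUnion Dset, y i))
      rw [husum S]
    have h2 : colorOf (v S') = χ (S'.biUnion Dset) := by
      show colorOf (φ (∑ j ∈ S', u j)) = colorOf (φ (∑ i ∈ S'.biUnion Dset, y i))
      rw [husum S']
    rw [h1, h2, hDmono S S' hS hS']
  -- the alternating-sum identity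
  have hid : ∑ S ∈ (Finset.univ : Finset (Fin m)).powerset, (-1 : R) ^ S.card * v S = 0 := by
    have halt := monomial_alt_sum a d (by omega) u
    rw [← halt]
    refine Finset.sum_congr rfl fun S _ => ?_
    simp [hv, hφeq, Finset.sum_apply]
  have hvempty : v ∅ = 0 := by
    have h1 : v ∅ = φ 0 := by
      show φ (∑ j ∈ (∅ : Finset (Fin m)), u j) = φ 0
      rw [Finset.sum_empty]
    rw [h1, hφeq, Finset.prod_eq_zero (Finset.mem_univ i₀) (by simp [zero_pow hi₀]), mul_zero]
  set F : Finset (Finset (Fin m)) :=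
    (Finset.univ : Finset (Fin m)).powerset.erase ∅ with hF
  have hsplitgen : ∀ w : Finset (Fin m) → R,
      ∑ S ∈ (Finset.univ : Finset (Fin m)).powerset, w S = w ∅ + ∑ S ∈ F, w S := by
    intro w
    exact (Finset.add_sum_erase _ w (by simp)).symm
  have hFsum : ∑ S ∈ F, (-1 : R) ^ S.card * v S = 0 := by
    have := hsplitgen (fun S => (-1 : R) ^ S.card * v S)
    rw [hid] at this
    simp only [Finset.card_empty, pow_zero, one_mul, hvempty] at this
    linear_combination -this
  have hsign : ∑ S ∈ F, (-1 : R) ^ S.card = -1 := by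
    have h0 := sum_superset_neg_one_pow (∅ : Finset (Fin m)) (R := R) ?_
    · have heq : (Finset.univ : Finset (Fin m)).powerset.filter
          (fun S => (∅ : Finset (Fin m)) ⊆ S) = (Finset.univ : Finset (Fin m)).powerset := by
        ext S; simp
      rw [heq] at h0
      have := hsplitgen (fun S => (-1 : R) ^ S.card)
      rw [h0] at this
      simp only [Finset.card_empty, pow_zero] at this
      linear_combination -this
    · intro h
      have h0m : 0 < m := by omega
      have : (⟨0, h0m⟩ : Fin m) ∈ (∅ : Finset (Fin m)) := by
        rw [h]; exact Finset.mem_univ _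
      simp at this
  have huniv : (Finset.univ : Finset (Fin m)).Nonempty :=
    ⟨(⟨0, by omega⟩ : Fin m), Finset.mem_univ _⟩
  have hrearr : v Finset.univ = ∑ S ∈ F, (-1 : R) ^ S.card * (v S - v Finset.univ) := by
    have : ∑ S ∈ F, (-1 : R) ^ S.card * (v S - v Finset.univ)
        = (∑ S ∈ F, (-1 : R) ^ S.card * v S)
          - (∑ S ∈ F, (-1 : R) ^ S.card) * v Finset.univ := by
      rw [Finset.sum_mul, ← Finset.sum_sub_distrib]
      refine Finset.sum_congr rfl fun S _ => ?_
      ring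
    rw [this, hFsum, hsign]
    ring
  have hterm : ∀ S ∈ F, f ((-1 : R) ^ S.card * (v S - v Finset.univ)) ≤ 2 * ρ := by
    intro S hS
    have hSne : S.Nonempty :=
      Finset.nonempty_iff_ne_empty.2 (Finset.ne_of_mem_erase hS)
    have hval := hvals S Finset.univ hSne huniv
    rcases Nat.even_or_odd S.card with he | ho
    · rw [he.neg_one_pow, one_mul]
      exact hval.le
    · rw [ho.neg_one_pow, neg_one_mul, hfneg]
      exact hval.le
  have hFcard : (F.card : ℝ) < 2 ^ m := by
    have h2 : F.card < 2 ^ m := by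
      have h3 := Finset.card_erase_of_mem
        (show (∅ : Finset (Fin m)) ∈ (Finset.univ : Finset (Fin m)).powerset by simp)
      rw [hF, h3, Finset.card_powerset, Finset.card_univ, Fintype.card_fin]
      have : 0 < 2 ^ m := Nat.pow_pos (by omega)
      omega
    exact_mod_cast h2
  have hmain : f (v Finset.univ) < ε := by
    calc f (v Finset.univ)
        = f (∑ S ∈ F, (-1 : R) ^ S.card * (v S - v Finset.univ)) := by rw [← hrearr]
      _ ≤ ∑ S ∈ F, f ((-1 : R) ^ S.card * (v S - v Finset.univ)) := hfsum F _
      _ ≤ F.card • (2 * ρ) := Finset.sum_le_card_nsmul F _ _ hterm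
      _ = (F.card : ℝ) * (2 * ρ) := by rw [nsmul_eq_mul]
      _ < 2 ^ m * (2 * ρ) := by
          apply mul_lt_mul_of_pos_right hFcard
          positivity
      _ = ε := by
          rw [hρ]
          field_simp
          ring
  -- conclude
  have hbne : (Finset.univ.biUnion Dset : Finset (Fin r)).Nonempty := by
    obtain ⟨z, hz⟩ := hDne ⟨0, by omega⟩
    exact ⟨z, Finset.mem_biUnion.2 ⟨⟨0, by omega⟩, Finset.mem_univ _, hz⟩⟩
  refine ⟨∑ i ∈ Finset.univ.biUnion Dset, y i, ?_, hyB ⟨Finset.univ.biUnion Dset, hbne, rfl⟩⟩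
  show dist (T (φ (∑ i ∈ Finset.univ.biUnion Dset, y i)) x) x < ε
  have : φ (∑ i ∈ Finset.univ.biUnion Dset, y i) = v Finset.univ := by
    show φ _ = φ (∑ j ∈ (Finset.univ : Finset (Fin m)), u j)
    rw [husum]
  rw [this]
  exact hmain
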